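/- arXiv:1911.06375 — 6 statements merged into one kernel-verified Lean document; each statement's English description precedes it below -/
import Mathlib

section
/- Let p : ℝ^d → [1,∞) be measurable with 1 < p_- ≤ p_+ < ∞. Then the following are equivalent: (i) p(·) ∈ 𝒫^∞_{γ_d}(ℝ^d); (ii) there exists p_∞ > 1 and constants C₁, C₂ ≥ 1 such that C₁^{-1} ≤ e^{−|x|²(p(x)/p_∞ − 1)} ≤ C₁ and C₂^{-1} ≤ e^{−|x|²(p'(x)/p'_∞ − 1)} ≤ C₂ for all x ∈ ℝ^d, where p'(x) = p(x)/(p(x)−1) and p'_∞ = p_∞/(p_∞−1). Moreover, in the implication (i) ⇒ (ii) one may take C₁ = e^{C_{γ_d}/p_∞} and C₂ = e^{C_{γ_d}(p_-)'/p_∞}, where (p_-)' = p_- /(p_- − 1) and C_{γ_d} is the constant from condition (i). -/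
open MeasureTheory Metric Set ENNReal

lemma exp_abs_bound' {t c : ℝ} (h : |t| ≤ c) :
    (Real.exp c)⁻¹ ≤ Real.exp t ∧ Real.exp t ≤ Real.exp c := by
  rw [← Real.exp_neg]
  exact ⟨Real.exp_le_exp.mpr (neg_le_of_abs_le h),
    Real.exp_le_exp.mpr (le_of_abs_le h)⟩

lemma pinf_ge_aux {d : ℕ} (hd : 1 ≤ d) (p : EuclideanSpace ℝ (Fin d) → ℝ)
    (pm : ℝ) (hlo : ∀ x, pm ≤ p x) (Cγ pinf : ℝ) (hC : 0 < Cγ)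
    (h : ∀ x : EuclideanSpace ℝ (Fin d), x ≠ 0 → |p x - pinf| ≤ Cγ / ‖x‖ ^ 2) :
    pm ≤ pinf := by
  by_contra hlt
  push_neg at hlt
  have hε0 : 0 < pm - pinf := by linarith
  set c : ℝ := Real.sqrt (Cγ / (pm - pinf)) + 1 with hcdef
  have hs : 0 ≤ Real.sqrt (Cγ / (pm - pinf)) := Real.sqrt_nonneg _
  have hc : 0 < c := by positivity
  set x : EuclideanSpace ℝ (Fin d) :=
    c • EuclideanSpace.single ⟨0, hd⟩ (1 : ℝ) with hxdef
  have hnorm : ‖x‖ = c := by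
    rw [hxdef, norm_smul, EuclideanSpace.norm_single]
    simp [abs_of_pos hc]
  have hx0 : x ≠ 0 := by
    intro h0
    rw [h0, norm_zero] at hnorm
    exact hc.ne hnorm
  have hb := h x hx0
  rw [hnorm] at hb
  have hsq : Cγ / (pm - pinf) < c ^ 2 := by
    have h1 : Real.sqrt (Cγ / (pm - pinf)) ^ 2 = Cγ / (pm - pinf) := by
      rw [Real.sq_sqrt (by positivity)]
    nlinarith
  have hc2 : (0 : ℝ) < c ^ 2 := by positivity
  have hlt2 : Cγ / c ^ 2 < pm - pinf := by
    rw [div_lt_iff₀ hc2]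
    rw [div_lt_iff₀ hε0] at hsq
    linarith
  have hge : pm - pinf ≤ |p x - pinf| := by
    have := hlo x
    rw [abs_of_nonneg (by linarith)]
    linarith
  linarith

lemma quant_aux {d : ℕ} (p : EuclideanSpace ℝ (Fin d) → ℝ)
    (pm : ℝ) (hpm : 1 < pm) (hlo : ∀ x, pm ≤ p x)
    (Cγ pinf : ℝ) (hC : 0 < Cγ) (hpinf : pm ≤ pinf)
    (h : ∀ x : EuclideanSpace ℝ (Fin d), x ≠ 0 → |p x - pinf| ≤ Cγ / ‖x‖ ^ 2) :
    ∀ x : EuclideanSpace ℝ (Fin d),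
      ((Real.exp (Cγ / pinf))⁻¹ ≤ Real.exp (-‖x‖ ^ 2 * (p x / pinf - 1)) ∧
        Real.exp (-‖x‖ ^ 2 * (p x / pinf - 1)) ≤ Real.exp (Cγ / pinf)) ∧
      ((Real.exp (Cγ * (pm / (pm - 1)) / pinf))⁻¹ ≤
          Real.exp (-‖x‖ ^ 2 * ((p x / (p x - 1)) / (pinf / (pinf - 1)) - 1)) ∧
        Real.exp (-‖x‖ ^ 2 * ((p x / (p x - 1)) / (pinf / (pinf - 1)) - 1)) ≤
          Real.exp (Cγ * (pm / (pm - 1)) / pinf)) := by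
  intro x
  have hpinf1 : 1 < pinf := lt_of_lt_of_le hpm hpinf
  have hpinf0 : 0 < pinf := by linarith
  have hp1 : 1 < p x := lt_of_lt_of_le hpm (hlo x)
  have hx2 : (0 : ℝ) ≤ ‖x‖ ^ 2 := sq_nonneg _
  -- key bound: ‖x‖² |p x - pinf| ≤ Cγ
  have hA : |‖x‖ ^ 2 * (p x - pinf)| ≤ Cγ := by
    rw [abs_mul, abs_of_nonneg hx2]
    rcases eq_or_ne x 0 with h0 | h0
    · simp [h0]
      exact hC.le
    · have h2 : (0 : ℝ) < ‖x‖ ^ 2 := by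
        have := norm_pos_iff.mpr h0
        positivity
      calc ‖x‖ ^ 2 * |p x - pinf| ≤ ‖x‖ ^ 2 * (Cγ / ‖x‖ ^ 2) := by
            exact mul_le_mul_of_nonneg_left (h x h0) hx2
        _ = Cγ := by field_simp
  constructor
  · -- first pair
    have ht1 : -‖x‖ ^ 2 * (p x / pinf - 1) = -(‖x‖ ^ 2 * (p x - pinf)) / pinf := by
      field_simp
    apply exp_abs_bound'
    rw [ht1, abs_div, abs_neg, abs_of_pos hpinf0]
    exact div_le_div₀ hC.le hA hpinf0 le_rfl
  · -- second pair
    have hden : (0 : ℝ) < (p x - 1) * pinf := by nlinarith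
    have ht2 : -‖x‖ ^ 2 * ((p x / (p x - 1)) / (pinf / (pinf - 1)) - 1)
        = (‖x‖ ^ 2 * (p x - pinf)) / ((p x - 1) * pinf) := by
      have h1 : p x - 1 ≠ 0 := by linarith
      have h2 : pinf - 1 ≠ 0 := by linarith
      have h3 : pinf ≠ 0 := by linarith
      field_simp
      ring
    apply exp_abs_bound'
    rw [ht2, abs_div, abs_of_pos hden]
    have hstep1 : |‖x‖ ^ 2 * (p x - pinf)| / ((p x - 1) * pinf)
        ≤ Cγ / ((pm - 1) * pinf) := by
      apply div_le_div₀ hC.le hA (by nlinarith)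
      have := hlo x
      nlinarith
    have hstep2 : Cγ / ((pm - 1) * pinf) ≤ Cγ * (pm / (pm - 1)) / pinf := by
      have heq : Cγ * (pm / (pm - 1)) / pinf = (Cγ * pm) / ((pm - 1) * pinf) := by
        field_simp
      rw [heq]
      exact div_le_div₀ (by nlinarith) (by nlinarith) (by nlinarith) le_rfl
    linarith

/-- Lemma (characterization of `𝒫^∞_{γ_d}(ℝ^d)`): for `1 < p_- ≤ p_+ < ∞`, the condition
`p(·) ∈ 𝒫^∞_{γ_d}(ℝ^d)` is equivalent to the existence of `p_∞ > 1` and constants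
`C₁, C₂ ≥ 1` with `C₁⁻¹ ≤ e^{-|x|²(p(x)/p_∞ - 1)} ≤ C₁` and
`C₂⁻¹ ≤ e^{-|x|²(p'(x)/p'_∞ - 1)} ≤ C₂` for all `x`.  Moreover, in the implication
(i) ⇒ (ii) one may take `C₁ = e^{C_{γ_d}/p_∞}` and `C₂ = e^{C_{γ_d}(p_-)'/p_∞}`. -/
theorem PgammaInf_equivalence (d : ℕ) (hd : 1 ≤ d)
    (p : EuclideanSpace ℝ (Fin d) → ℝ) (hpmeas : Measurable p)
    (pm pP : ℝ) (hpm : 1 < pm) (hlo : ∀ x, pm ≤ p x) (hhi : ∀ x, p x ≤ pP) :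
    ((∃ Cγ pinf : ℝ, 0 < Cγ ∧ 1 ≤ pinf ∧
        ∀ x : EuclideanSpace ℝ (Fin d), x ≠ 0 → |p x - pinf| ≤ Cγ / ‖x‖ ^ 2) ↔
      (∃ pinf C₁ C₂ : ℝ, 1 < pinf ∧ 1 ≤ C₁ ∧ 1 ≤ C₂ ∧
        ∀ x : EuclideanSpace ℝ (Fin d),
          (C₁⁻¹ ≤ Real.exp (-‖x‖ ^ 2 * (p x / pinf - 1)) ∧
            Real.exp (-‖x‖ ^ 2 * (p x / pinf - 1)) ≤ C₁) ∧
          (C₂⁻¹ ≤ Real.exp (-‖x‖ ^ 2 *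
              ((p x / (p x - 1)) / (pinf / (pinf - 1)) - 1)) ∧
            Real.exp (-‖x‖ ^ 2 *
              ((p x / (p x - 1)) / (pinf / (pinf - 1)) - 1)) ≤ C₂)))
    ∧
    (∀ Cγ pinf : ℝ, 0 < Cγ → 1 ≤ pinf →
      (∀ x : EuclideanSpace ℝ (Fin d), x ≠ 0 → |p x - pinf| ≤ Cγ / ‖x‖ ^ 2) →
      ∀ x : EuclideanSpace ℝ (Fin d),
        ((Real.exp (Cγ / pinf))⁻¹ ≤ Real.exp (-‖x‖ ^ 2 * (p x / pinf - 1)) ∧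
          Real.exp (-‖x‖ ^ 2 * (p x / pinf - 1)) ≤ Real.exp (Cγ / pinf)) ∧
        ((Real.exp (Cγ * (pm / (pm - 1)) / pinf))⁻¹ ≤
            Real.exp (-‖x‖ ^ 2 * ((p x / (p x - 1)) / (pinf / (pinf - 1)) - 1)) ∧
          Real.exp (-‖x‖ ^ 2 * ((p x / (p x - 1)) / (pinf / (pinf - 1)) - 1)) ≤
            Real.exp (Cγ * (pm / (pm - 1)) / pinf))) := by
  constructor
  · constructor
    · -- (i) → (ii)
      rintro ⟨Cγ, pinf, hC, hp1, h⟩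
      have hge : pm ≤ pinf := pinf_ge_aux hd p pm hlo Cγ pinf hC h
      have hpinf0 : 0 < pinf := by linarith
      refine ⟨pinf, Real.exp (Cγ / pinf), Real.exp (Cγ * (pm / (pm - 1)) / pinf),
        lt_of_lt_of_le hpm hge, Real.one_le_exp (by positivity),
        Real.one_le_exp (by
          have : (0:ℝ) < pm - 1 := by linarith
          positivity), ?_⟩
      exact quant_aux p pm hpm hlo Cγ pinf hC hge h
    · -- (ii) → (i)
      rintro ⟨pinf, C₁, C₂, hp1, hC₁, hC₂, H⟩
      have hpinf0 : (0 : ℝ) < pinf := by linarith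
      have hlog : 0 ≤ Real.log C₁ := Real.log_nonneg hC₁
      refine ⟨pinf * Real.log C₁ + 1, pinf, by positivity, hp1.le, ?_⟩
      intro x hx0
      have h2 : (0 : ℝ) < ‖x‖ ^ 2 := by
        have := norm_pos_iff.mpr hx0
        positivity
      obtain ⟨⟨hl, hr⟩, -⟩ := H x
      have hC₁0 : (0 : ℝ) < C₁ := by linarith
      set t := -‖x‖ ^ 2 * (p x / pinf - 1) with htdef
      have h1 : t ≤ Real.log C₁ := by
        rw [Real.le_log_iff_exp_le hC₁0]
        exact hr
      have h2' : -Real.log C₁ ≤ t := by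
        have := (Real.log_le_iff_le_exp (by positivity)).mpr hl
        rwa [Real.log_inv] at this
      have habs : |t| ≤ Real.log C₁ := abs_le.mpr ⟨h2', h1⟩
      have ht1 : t = -(‖x‖ ^ 2 * (p x - pinf)) / pinf := by
        rw [htdef]; field_simp
      have hAbs2 : |‖x‖ ^ 2 * (p x - pinf)| ≤ pinf * Real.log C₁ := by
        have : |t| = |‖x‖ ^ 2 * (p x - pinf)| / pinf := by
          rw [ht1, abs_div, abs_neg, abs_of_pos hpinf0]
        rw [this, div_le_iff₀ hpinf0] at habs
        linarith [habs]
      rw [abs_mul, abs_of_nonneg (sq_nonneg (‖x‖))] at hAbs2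
      rw [le_div_iff₀ h2]
      nlinarith [hAbs2]
  · -- quantitative part
    intro Cγ pinf hC hp1 h
    have hge : pm ≤ pinf := pinf_ge_aux hd p pm hlo Cγ pinf hC h
    exact quant_aux p pm hpm hlo Cγ pinf hC hge h
end

section
/- Let d ≥ 1. There exists a countable family ℱ of closed Euclidean balls in ℝ^d, containing the ball B(0,1), and constants N ∈ ℕ, c ≥ 1 and C_n ≥ 1 depending only on d, such that: (i) the balls of ℱ cover ℝ^d; (ii) Σ_{B∈ℱ} χ_B(x) ≤ N for all x ∈ ℝ^d; (iii) every ball B ∈ ℱ other than B(0,1) has center c_B with |c_B| ≥ 1/2 and diameter 2/(2|c_B|) = 1/|c_B| (it is the double of a ball of diameter 1/(2|c_B|)); (iv) for every B ∈ ℱ and all x, y ∈ B, c^{-1} e^{−|y|²} ≤ e^{−|x|²} ≤ c e^{−|y|²}; (v) for every x ∈ B ∈ ℱ, the admissible ball B_h(x) = {y : |x−y| ≤ d·min(1, 1/|x|)} is contained in the dilated ball C_n·B (same center, radius multiplied by C_n); and (vi) the dilated family {C_n·B : B ∈ ℱ} also has bounded overlap and satisfies the Gaussian-density comparability of (iv).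 -/
open MeasureTheory Metric Set ENNReal

namespace GaussCover

variable {d : ℕ}

noncomputable def delk (d k : ℕ) : ℝ := 1 / (2 ^ k * (8 * d))

lemma delk_pos (hd : 1 ≤ d) (k : ℕ) : 0 < delk d k := by
  have : (0:ℝ) < d := by exact_mod_cast hd
  unfold delk; positivity

def Lat (d k : ℕ) : Set (EuclideanSpace ℝ (Fin d)) :=
  {c | ∃ z : Fin d → ℤ, ∀ i, c i = delk d k * z i}

def Sset (d : ℕ) : Set (EuclideanSpace ℝ (Fin d)) :=
  {c | ∃ k : ℕ, c ∈ Lat d k ∧ 2 ^ k - 1/4 ≤ ‖c‖ ∧ ‖c‖ ≤ 2 ^ (k+1) + 1/4}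

noncomputable def Fam (d : ℕ) : Set (EuclideanSpace ℝ (Fin d) × ℝ) :=
  insert ((0 : EuclideanSpace ℝ (Fin d)), (1:ℝ))
    ((fun c => (c, 1 / (2 * ‖c‖))) '' Sset d)

lemma coord_abs_le_norm (v : EuclideanSpace ℝ (Fin d)) (i : Fin d) : |v i| ≤ ‖v‖ := by
  rw [EuclideanSpace.norm_eq]
  rw [← Real.sqrt_sq_eq_abs]
  apply Real.sqrt_le_sqrt
  have := Finset.single_le_sum (f := fun j => ‖v j‖ ^ 2)
    (fun j _ => by positivity) (Finset.mem_univ i)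
  simpa [Real.norm_eq_abs, sq_abs] using this

lemma norm_le_of_coords (hd : 1 ≤ d) (v : EuclideanSpace ℝ (Fin d)) {a : ℝ} (ha : 0 ≤ a)
    (h : ∀ i, |v i| ≤ a) : ‖v‖ ≤ d * a := by
  rw [EuclideanSpace.norm_eq]
  have h1 : ∑ i, ‖v i‖ ^ 2 ≤ (d : ℝ) * a ^ 2 := by
    calc ∑ i, ‖v i‖ ^ 2 ≤ ∑ _i : Fin d, a ^ 2 := by
          apply Finset.sum_le_sum
          intro i _
          have := h i
          rw [Real.norm_eq_abs]
          nlinarith [abs_nonneg (v i)]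
      _ = (d : ℝ) * a ^ 2 := by simp [mul_comm]
  have hd' : (1:ℝ) ≤ d := by exact_mod_cast hd
  calc Real.sqrt (∑ i, ‖v i‖ ^ 2) ≤ Real.sqrt ((d:ℝ) * a ^ 2) := Real.sqrt_le_sqrt h1
    _ ≤ Real.sqrt (((d:ℝ) * a) ^ 2) := by
        apply Real.sqrt_le_sqrt; nlinarith
    _ = (d:ℝ) * a := by
        rw [Real.sqrt_sq (by positivity)]

lemma gauss_one_side {x y c₀ : EuclideanSpace ℝ (Fin d)} {ρ M : ℝ}
    (hx : ‖x - c₀‖ ≤ ρ) (hy : ‖y - c₀‖ ≤ ρ) (hM : 2*ρ*(2*‖c₀‖+2*ρ) ≤ M) :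
    Real.exp (-‖x‖ ^ 2) ≤ Real.exp M * Real.exp (-‖y‖ ^ 2) := by
  rw [← Real.exp_add]
  apply Real.exp_le_exp.2
  have h1 : |‖y‖ - ‖x‖| ≤ ‖y - x‖ := abs_norm_sub_norm_le y x
  have h2 : ‖y - x‖ ≤ ‖y - c₀‖ + ‖x - c₀‖ := by
    have : y - x = (y - c₀) - (x - c₀) := by abel
    rw [this]; exact norm_sub_le _ _
  have h3 : ‖x‖ - ‖c₀‖ ≤ ρ := le_trans (norm_sub_norm_le x c₀) hx
  have h4 : ‖y‖ - ‖c₀‖ ≤ ρ := le_trans (norm_sub_norm_le y c₀) hy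
  have h5 : ‖y‖ - ‖x‖ ≤ 2 * ρ := by
    have := (abs_le.1 h1).2
    linarith
  have hρ : 0 ≤ ρ := le_trans (norm_nonneg _) hx
  nlinarith [norm_nonneg x, norm_nonneg y, norm_nonneg c₀,
    mul_le_mul_of_nonneg_right h5 (by positivity : (0:ℝ) ≤ ‖y‖ + ‖x‖),
    mul_le_mul_of_nonneg_left (by linarith : ‖y‖ + ‖x‖ ≤ 2*‖c₀‖ + 2*ρ) (by positivity : (0:ℝ) ≤ 2*ρ)]

lemma gauss_pair {x y c₀ : EuclideanSpace ℝ (Fin d)} {ρ M : ℝ}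
    (hx : ‖x - c₀‖ ≤ ρ) (hy : ‖y - c₀‖ ≤ ρ) (hM : 2*ρ*(2*‖c₀‖+2*ρ) ≤ M) :
    (Real.exp M)⁻¹ * Real.exp (-‖y‖ ^ 2) ≤ Real.exp (-‖x‖ ^ 2) ∧
      Real.exp (-‖x‖ ^ 2) ≤ Real.exp M * Real.exp (-‖y‖ ^ 2) := by
  constructor
  · have := gauss_one_side hy hx hM
    rw [inv_mul_le_iff₀ (Real.exp_pos M)]
    linarith
  · exact gauss_one_side hx hy hM

/-- Membership structure of the family. -/
lemma mem_Fam_elim {b : EuclideanSpace ℝ (Fin d) × ℝ} (hb : b ∈ Fam d) :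
    b = ((0 : EuclideanSpace ℝ (Fin d)), (1:ℝ)) ∨
      ∃ c ∈ Sset d, b = (c, 1 / (2 * ‖c‖)) := by
  rcases hb with h | ⟨c, hc, rfl⟩
  · exact Or.inl h
  · exact Or.inr ⟨c, hc, rfl⟩

lemma Sset_norm_ge {c : EuclideanSpace ℝ (Fin d)} (hc : c ∈ Sset d) : (3/4 : ℝ) ≤ ‖c‖ := by
  obtain ⟨k, -, h1, -⟩ := hc
  have : (1:ℝ) ≤ 2 ^ k := one_le_pow₀ (by norm_num)
  linarith

lemma Sset_radius_le {c : EuclideanSpace ℝ (Fin d)} (hc : c ∈ Sset d) :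
    1 / (2 * ‖c‖) ≤ 2/3 := by
  have h := Sset_norm_ge hc
  rw [div_le_iff₀ (by linarith)]
  linarith

lemma Sset_radius_pos {c : EuclideanSpace ℝ (Fin d)} (hc : c ∈ Sset d) :
    0 < 1 / (2 * ‖c‖) := by
  have h := Sset_norm_ge hc
  positivity

/-- Countability. -/
lemma Fam_countable (d : ℕ) : (Fam d).Countable := by
  apply Set.Countable.insert
  apply Set.Countable.image
  have : Sset d ⊆ ⋃ k : ℕ, Lat d k := by
    rintro c ⟨k, hk, -⟩; exact Set.mem_iUnion.2 ⟨k, hk⟩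
  apply Set.Countable.mono this
  apply Set.countable_iUnion
  intro k
  have : Lat d k = Set.range (fun z : Fin d → ℤ =>
      (WithLp.toLp 2 (fun i => delk d k * z i) : EuclideanSpace ℝ (Fin d))) := by
    ext c
    constructor
    · rintro ⟨z, hz⟩; exact ⟨z, by ext i; exact (hz i).symm⟩
    · rintro ⟨z, rfl⟩; exact ⟨z, fun i => rfl⟩
  rw [this]
  exact Set.countable_range _

/-- The covering property. -/
lemma Fam_cover (hd : 1 ≤ d) (x : EuclideanSpace ℝ (Fin d)) :
    ∃ b ∈ Fam d, x ∈ Metric.closedBall b.1 b.2 := by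
  by_cases hx : ‖x‖ ≤ 1
  · refine ⟨((0 : EuclideanSpace ℝ (Fin d)), (1:ℝ)), Set.mem_insert _ _, ?_⟩
    simpa [Metric.mem_closedBall, dist_eq_norm] using hx
  · push_neg at hx
    set k := Nat.log 2 ⌊‖x‖⌋₊ with hk
    set δ := delk d k with hδdef
    have hδ : 0 < δ := delk_pos hd k
    have hd0 : (0:ℝ) < d := by exact_mod_cast hd
    -- dyadic bounds on ‖x‖
    have hn1 : 1 ≤ ⌊‖x‖⌋₊ := Nat.one_le_iff_ne_zero.2 (by
      have : (1:ℝ) ≤ ‖x‖ := le_of_lt hx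
      simp [Nat.floor_eq_zero]
      exact le_of_lt hx)
    have hk1 : (2:ℝ) ^ k ≤ ‖x‖ := by
      have h1 : (2:ℕ) ^ k ≤ ⌊‖x‖⌋₊ := Nat.pow_log_le_self 2 (by omega)
      have h2 : (⌊‖x‖⌋₊ : ℝ) ≤ ‖x‖ := Nat.floor_le (norm_nonneg x)
      calc (2:ℝ) ^ k = ((2^k : ℕ) : ℝ) := by push_cast; ring
        _ ≤ (⌊‖x‖⌋₊ : ℝ) := by exact_mod_cast h1
        _ ≤ ‖x‖ := h2
    have hk2 : ‖x‖ < 2 ^ (k+1) := by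
      have h1 : ⌊‖x‖⌋₊ < 2 ^ (k+1) := Nat.lt_pow_succ_log_self (by norm_num) _
      have h2 : ‖x‖ < (⌊‖x‖⌋₊ : ℝ) + 1 := Nat.lt_floor_add_one _
      have h3 : (⌊‖x‖⌋₊ : ℝ) + 1 ≤ ((2:ℕ) ^ (k+1) : ℝ) := by exact_mod_cast h1
      calc ‖x‖ < (⌊‖x‖⌋₊ : ℝ) + 1 := h2
        _ ≤ ((2:ℕ)^(k+1) : ℝ) := h3
        _ = 2 ^ (k+1) := by push_cast; ring
    -- the lattice point
    set c : EuclideanSpace ℝ (Fin d) := WithLp.toLp 2 (fun i => δ * round (x i / δ)) with hc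
    have hcoord : ∀ i, |x i - c i| ≤ δ / 2 := by
      intro i
      have h1 : |x i / δ - round (x i / δ)| ≤ 1/2 := abs_sub_round _
      have : x i - c i = δ * (x i / δ - round (x i / δ)) := by
        simp only [hc]
        field_simp
      rw [this, abs_mul, abs_of_pos hδ]
      calc δ * |x i / δ - round (x i / δ)| ≤ δ * (1/2) := by
            exact mul_le_mul_of_nonneg_left h1 (le_of_lt hδ)
        _ = δ / 2 := by ring
    have hpk : (1:ℝ) ≤ 2 ^ k := one_le_pow₀ (by norm_num)
    have hdist : ‖x - c‖ ≤ 1 / (2 ^ k * 16) := by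
      have h := norm_le_of_coords hd (x - c) (by positivity : (0:ℝ) ≤ δ/2)
        (fun i => by simpa using hcoord i)
      have heq : (d:ℝ) * (δ/2) = 1 / (2 ^ k * 16) := by
        simp only [hδdef, delk]
        field_simp
        ring
      linarith
    have hsmall : 1 / ((2:ℝ) ^ k * 16) ≤ 1/4 := by
      rw [div_le_div_iff₀ (by positivity) (by norm_num)]
      linarith
    have hxc : ‖c‖ ≥ ‖x‖ - 1 / (2^k*16) ∧ ‖c‖ ≤ ‖x‖ + 1 / (2^k*16) := by
      constructor
      · have := norm_sub_norm_le x c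
        linarith
      · have := norm_sub_norm_le c x
        have h2 : ‖c - x‖ = ‖x - c‖ := by rw [norm_sub_rev]
        linarith
    have hcS : c ∈ Sset d := by
      refine ⟨k, ⟨fun i => round (x i / δ), fun i => rfl⟩, ?_, ?_⟩
      · linarith [hxc.1]
      · have : (2:ℝ)^(k+1) = 2 * 2^k := by ring
        linarith [hxc.2]
    refine ⟨(c, 1/(2*‖c‖)), Set.mem_insert_iff.2 (Or.inr ⟨c, hcS, rfl⟩), ?_⟩
    simp only [Metric.mem_closedBall, dist_eq_norm]
    have hnc : ‖c‖ ≤ 3 * 2^k := by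
      have h2 : (2:ℝ)^(k+1) = 2 * 2^k := by ring
      linarith [hxc.2]
    have hncpos : (0:ℝ) < ‖c‖ := by linarith [hxc.1]
    calc ‖x - c‖ ≤ 1 / (2^k*16) := hdist
      _ ≤ 1 / (2*‖c‖) := by
          apply one_div_le_one_div_of_le (by positivity)
          linarith

lemma Fam_admissible (hd : 1 ≤ d) {b : EuclideanSpace ℝ (Fin d) × ℝ} (hb : b ∈ Fam d)
    {x : EuclideanSpace ℝ (Fin d)} (hx : x ∈ Metric.closedBall b.1 b.2) :
    {y : EuclideanSpace ℝ (Fin d) | ‖x - y‖ ≤ (d : ℝ) * min 1 (1 / ‖x‖)} ⊆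
      Metric.closedBall b.1 ((1 + 18 * d) * b.2) := by
  have hd0 : (1:ℝ) ≤ d := by exact_mod_cast hd
  intro y hy
  simp only [Set.mem_setOf_eq] at hy
  simp only [Metric.mem_closedBall, dist_eq_norm] at hx ⊢
  rcases mem_Fam_elim hb with rfl | ⟨c, hc, rfl⟩
  · -- unit ball at origin
    simp only at hx ⊢
    have hmin : min 1 (1 / ‖x‖) ≤ 1 := min_le_left _ _
    have h1 : ‖x - y‖ ≤ (d:ℝ) := by
      calc ‖x - y‖ ≤ (d:ℝ) * min 1 (1/‖x‖) := hy
        _ ≤ (d:ℝ) * 1 := by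
            apply mul_le_mul_of_nonneg_left hmin (by positivity)
        _ = d := by ring
    have : ‖y - 0‖ ≤ ‖y - x‖ + ‖x - 0‖ := by
      have : y - 0 = (y - x) + (x - 0) := by abel
      rw [this]; exact norm_add_le _ _
    have h2 : ‖y - x‖ = ‖x - y‖ := by rw [norm_sub_rev]
    have : ‖y - (0 : EuclideanSpace ℝ (Fin d))‖ ≤ (d:ℝ) + 1 := by
      simp only [sub_zero] at *
      calc ‖y‖ ≤ ‖y - x‖ + ‖x‖ := by
            have h3 : y = (y - x) + x := by abel
            nth_rewrite 1 [h3]; exact norm_add_le _ _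
        _ ≤ d + 1 := by rw [h2]; linarith
    calc ‖y - (0 : EuclideanSpace ℝ (Fin d))‖ ≤ (d:ℝ) + 1 := this
      _ ≤ (1 + 18*d) * 1 := by nlinarith
  · -- ball away from origin
    simp only at hx ⊢
    set r : ℝ := 1 / (2 * ‖c‖) with hr
    have hcn : (3/4:ℝ) ≤ ‖c‖ := Sset_norm_ge hc
    have hrle : r ≤ 2/3 := Sset_radius_le hc
    have hrpos : 0 < r := Sset_radius_pos hc
    have hrc : 2 * r * ‖c‖ = 1 := by
      rw [hr]; field_simp
    -- lower bound on ‖x‖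
    have hxn : ‖c‖ / 9 ≤ ‖x‖ := by
      have h1 : ‖c‖ - r ≤ ‖x‖ := by
        have := norm_sub_norm_le c x
        have h2 : ‖c - x‖ = ‖x - c‖ := by rw [norm_sub_rev]
        linarith
      nlinarith
    have hxpos : 0 < ‖x‖ := by linarith
    have hmin : min 1 (1/‖x‖) ≤ 18 * r := by
      calc min 1 (1/‖x‖) ≤ 1/‖x‖ := min_le_right _ _
        _ ≤ 9 / ‖c‖ := by
            rw [div_le_div_iff₀ hxpos (by linarith)]
            nlinarith
        _ = 18 * r := by rw [hr]; field_simp; ring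
    have h1 : ‖x - y‖ ≤ 18 * d * r := by
      calc ‖x - y‖ ≤ (d:ℝ) * min 1 (1/‖x‖) := hy
        _ ≤ (d:ℝ) * (18 * r) := mul_le_mul_of_nonneg_left hmin (by positivity)
        _ = 18 * d * r := by ring
    calc ‖y - c‖ ≤ ‖y - x‖ + ‖x - c‖ := by
          have h3 : y - c = (y - x) + (x - c) := by abel
          rw [h3]; exact norm_add_le _ _
      _ ≤ 18 * d * r + r := by
          have h2 : ‖y - x‖ = ‖x - y‖ := by rw [norm_sub_rev]
          linarith
      _ = (1 + 18 * d) * r := by ring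

lemma Fam_gauss (hd : 1 ≤ d) {b : EuclideanSpace ℝ (Fin d) × ℝ} (hb : b ∈ Fam d)
    {Cn : ℝ} (hCn : 1 ≤ Cn)
    {x y : EuclideanSpace ℝ (Fin d)}
    (hx : x ∈ Metric.closedBall b.1 (Cn * b.2)) (hy : y ∈ Metric.closedBall b.1 (Cn * b.2)) :
    (Real.exp (6 * Cn^2))⁻¹ * Real.exp (-‖y‖ ^ 2) ≤ Real.exp (-‖x‖ ^ 2) ∧
      Real.exp (-‖x‖ ^ 2) ≤ Real.exp (6 * Cn^2) * Real.exp (-‖y‖ ^ 2) := by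
  simp only [Metric.mem_closedBall, dist_eq_norm] at hx hy
  rcases mem_Fam_elim hb with rfl | ⟨c, hc, rfl⟩
  · simp only at hx hy
    refine gauss_pair hx hy ?_
    have : ‖(0 : EuclideanSpace ℝ (Fin d))‖ = 0 := norm_zero
    rw [this]
    nlinarith
  · simp only at hx hy
    set r : ℝ := 1 / (2 * ‖c‖) with hr
    have hcn : (3/4:ℝ) ≤ ‖c‖ := Sset_norm_ge hc
    have hrle : r ≤ 2/3 := Sset_radius_le hc
    have hrpos : 0 < r := Sset_radius_pos hc
    have hrc : 2 * r * ‖c‖ = 1 := by rw [hr]; field_simp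
    refine gauss_pair hx hy ?_
    have h1 : r^2 ≤ 4/9 := by nlinarith
    have h2 : Cn ≤ Cn^2 := by nlinarith
    have h3 : Cn^2 * r^2 ≤ Cn^2 * (4/9) := by nlinarith
    nlinarith [hrc, h2, h3]

lemma encard_biUnion_le {α β : Type*} (K : Finset β) (G : β → Set α) (M : ℕ∞)
    (h : ∀ k, (G k).encard ≤ M) : (⋃ k ∈ K, G k).encard ≤ K.card * M := by
  classical
  induction K using Finset.induction_on with
  | empty => simp
  | insert _ _ hx ih =>
      rename_i a t
      rw [Finset.set_biUnion_insert, Finset.card_insert_of_notMem hx]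
      calc (G a ∪ ⋃ k ∈ t, G k).encard ≤ (G a).encard + (⋃ k ∈ t, G k).encard :=
            Set.encard_union_le _ _
        _ ≤ M + t.card * M := add_le_add (h a) ih
        _ = (t.card + 1) * M := by ring

lemma count_latball (hd : 1 ≤ d) (k : ℕ) (x : EuclideanSpace ℝ (Fin d)) (R : ℝ) (B : ℕ)
    (hRB : R ≤ B * delk d k) :
    {c | c ∈ Lat d k ∧ ‖x - c‖ ≤ R}.encard ≤ (((2*B+1)^d : ℕ) : ℕ∞) := by
  classical
  set δ := delk d k with hδdef
  have hδ : 0 < δ := delk_pos hd k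
  set t : Finset (Fin d → ℤ) :=
    Fintype.piFinset (fun i : Fin d => Finset.Icc (⌈x i / δ⌉ - B) (⌈x i / δ⌉ + B)) with ht
  have hsub : {c | c ∈ Lat d k ∧ ‖x - c‖ ≤ R} ⊆
      (fun z : Fin d → ℤ => (WithLp.toLp 2 (fun i => δ * z i) : EuclideanSpace ℝ (Fin d))) '' ↑t := by
    rintro c ⟨⟨z, hz⟩, hball⟩
    refine ⟨z, ?_, (by ext i; exact (hz i).symm)⟩
    rw [Finset.mem_coe, ht, Fintype.mem_piFinset]
    intro i
    have h1 : |x i - c i| ≤ R := by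
      refine le_trans ?_ hball
      simpa using coord_abs_le_norm (x - c) i
    rw [hz i] at h1
    have h2 : |x i / δ - z i| ≤ B := by
      have heq : x i / δ - z i = (x i - δ * z i) / δ := by field_simp
      rw [heq, abs_div, abs_of_pos hδ, div_le_iff₀ hδ]
      have := le_trans h1 hRB
      linarith
    have h3 := abs_le.1 h2
    have hc1 : x i / δ ≤ (⌈x i / δ⌉ : ℝ) := Int.le_ceil _
    have hc2 : (⌈x i / δ⌉ : ℝ) < x i / δ + 1 := Int.ceil_lt_add_one _
    rw [Finset.mem_Icc]
    constructor
    · have : ((⌈x i / δ⌉ - B : ℤ) : ℝ) < (z i : ℝ) + 1 := by push_cast; linarith [h3.1]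
      have := Int.lt_add_one_iff.1 (by exact_mod_cast this)
      omega
    · have : (z i : ℝ) ≤ ((⌈x i / δ⌉ + B : ℤ) : ℝ) := by push_cast; linarith [h3.2]
      exact_mod_cast this
  calc {c | c ∈ Lat d k ∧ ‖x - c‖ ≤ R}.encard
      ≤ ((fun z : Fin d → ℤ => (WithLp.toLp 2 (fun i => δ * z i) : EuclideanSpace ℝ (Fin d))) '' ↑t).encard :=
        Set.encard_mono hsub
    _ ≤ (↑t : Set (Fin d → ℤ)).encard := Set.encard_image_le _ _
    _ = (t.card : ℕ∞) := Set.encard_coe_eq_coe_finsetCard t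
    _ ≤ (((2*B+1)^d : ℕ) : ℕ∞) := by
        have : t.card ≤ (2*B+1)^d := by
          rw [ht, Fintype.card_piFinset]
          calc ∏ i : Fin d, (Finset.Icc (⌈x i / δ⌉ - B) (⌈x i / δ⌉ + B)).card
              ≤ ∏ _i : Fin d, (2*B+1) := by
                apply Finset.prod_le_prod (fun _ _ => Nat.zero_le _)
                intro i _
                rw [Int.card_Icc]
                simp only [Int.toNat_le]
                push_cast
                omega
            _ = (2*B+1)^d := by simp [Finset.prod_const]
        exact_mod_cast this

/-- The finite set of scales relevant at a point `x`. -/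
noncomputable def Kx (d : ℕ) (x : EuclideanSpace ℝ (Fin d)) : Finset ℕ :=
  Finset.range (16*(1+18*d)) ∪
    Finset.Icc (Nat.log 2 ⌊‖x‖ + 2*(1+18*(d:ℝ))⌋₊ - 2) (Nat.log 2 ⌊‖x‖ + 2*(1+18*(d:ℝ))⌋₊ + 1)

lemma Kx_card (d : ℕ) (x : EuclideanSpace ℝ (Fin d)) :
    (Kx d x).card ≤ 16*(1+18*d) + 4 := by
  calc (Kx d x).card ≤ (Finset.range (16*(1+18*d))).card +
      (Finset.Icc (Nat.log 2 ⌊‖x‖ + 2*(1+18*(d:ℝ))⌋₊ - 2)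
        (Nat.log 2 ⌊‖x‖ + 2*(1+18*(d:ℝ))⌋₊ + 1)).card := Finset.card_union_le _ _
    _ ≤ 16*(1+18*d) + 4 := by
        rw [Finset.card_range, Nat.card_Icc]
        omega

lemma valid_mem_Kx (hd : 1 ≤ d) {x c : EuclideanSpace ℝ (Fin d)} {k : ℕ}
    (h1 : 2 ^ k - 1/4 ≤ ‖c‖) (h2 : ‖c‖ ≤ 2 ^ (k+1) + 1/4)
    (hball : ‖x - c‖ ≤ (1+18*(d:ℝ)) / (2 * ‖c‖)) : k ∈ Kx d x := by
  have hd1 : (1:ℝ) ≤ d := by exact_mod_cast hd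
  set Cn : ℝ := 1 + 18*(d:ℝ) with hCndef
  have hCn : (19:ℝ) ≤ Cn := by rw [hCndef]; linarith
  set p : ℝ := 2 ^ k with hpdef
  have hp : (1:ℝ) ≤ p := one_le_pow₀ (by norm_num)
  have hcl : (3/4)*p ≤ ‖c‖ := by
    have : (1:ℝ)/4 ≤ p/4 := by linarith
    rw [hpdef]; linarith
  have hcpos : (0:ℝ) < ‖c‖ := by linarith
  have hrad : Cn / (2*‖c‖) ≤ Cn / p := by
    apply div_le_div_of_nonneg_left (by linarith) (by linarith) (by linarith)
  have hradCn : Cn / p ≤ Cn := by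
    rw [div_le_iff₀ (by linarith)]
    nlinarith
  have hx1 : (3/4)*p - Cn ≤ ‖x‖ := by
    have := norm_sub_norm_le c x
    have hcx : ‖c - x‖ = ‖x - c‖ := norm_sub_rev c x
    have : ‖c‖ - ‖x‖ ≤ Cn := by
      calc ‖c‖ - ‖x‖ ≤ ‖c - x‖ := norm_sub_norm_le c x
        _ = ‖x - c‖ := norm_sub_rev c x
        _ ≤ Cn / (2*‖c‖) := hball
        _ ≤ Cn / p := hrad
        _ ≤ Cn := hradCn
    linarith
  have hx2 : ‖x‖ ≤ 2*p + 1/4 + Cn := by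
    have h2' : ‖c‖ ≤ 2*p + 1/4 := by
      have : (2:ℝ)^(k+1) = 2*p := by rw [hpdef]; ring
      linarith
    calc ‖x‖ ≤ ‖x - c‖ + ‖c‖ := by
          have h3 : x = (x - c) + c := by abel
          nth_rewrite 1 [h3]; exact norm_add_le _ _
      _ ≤ Cn + (2*p + 1/4) := by
          have : ‖x - c‖ ≤ Cn := le_trans hball (le_trans hrad hradCn)
          linarith
      _ = 2*p + 1/4 + Cn := by ring
  set u : ℝ := ‖x‖ + 2*Cn with hudef
  have hu0 : (0:ℝ) ≤ u := by
    have := norm_nonneg x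
    rw [hudef]; linarith
  have hu1 : p ≤ 2*u := by
    have : (3/4)*p ≤ u - Cn := by rw [hudef]; linarith
    nlinarith
  have hu2 : u ≤ 2*p + 4*Cn := by rw [hudef]; linarith
  by_cases hcase : u ≤ 8*Cn
  · -- small case: k ∈ range
    apply Finset.mem_union_left
    rw [Finset.mem_range]
    have hpbound : p ≤ 16*Cn := by linarith
    have hnat : (2:ℕ)^k ≤ 16*(1+18*d) := by
      have h5 : ((2^k : ℕ) : ℝ) ≤ ((16*(1+18*d) : ℕ) : ℝ) := by
        push_cast
        rw [← hpdef]
        rw [hCndef] at hpbound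
        linarith
      exact_mod_cast h5
    have := Nat.lt_two_pow_self (n := k)
    omega
  · push_neg at hcase
    apply Finset.mem_union_right
    have hun : (1:ℝ) ≤ u := by linarith
    have hn1 : 1 ≤ ⌊u⌋₊ := Nat.le_floor (by exact_mod_cast hun)
    set n := ⌊u⌋₊ with hn
    set m := Nat.log 2 n with hm
    have hmu : (2:ℝ)^m ≤ u := by
      calc (2:ℝ)^m = ((2^m : ℕ) : ℝ) := by push_cast; ring
        _ ≤ (n : ℝ) := by exact_mod_cast Nat.pow_log_le_self 2 (by omega)
        _ ≤ u := by rw [hn]; exact Nat.floor_le (by linarith)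
    have hum : u < (2:ℝ)^(m+1) := by
      have hnn : n + 1 ≤ 2^(m+1) := Nat.lt_pow_succ_log_self (by norm_num) n
      calc u < (n : ℝ) + 1 := by rw [hn]; exact Nat.lt_floor_add_one u
        _ ≤ (2:ℝ)^(m+1) := by exact_mod_cast hnn
    have hkup : k < m + 2 := by
      have h6 : (2:ℝ)^k < (2:ℝ)^(m+2) := by
        have h7 : (2:ℝ)^(m+2) = 2*(2:ℝ)^(m+1) := by ring
        rw [← hpdef, h7]
        linarith
      exact (pow_lt_pow_iff_right₀ (by norm_num : (1:ℝ) < 2)).1 h6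
    have hklo : m ≤ k + 2 := by
      have h4 : u ≤ 4*p := by linarith
      have h6 : (2:ℝ)^m ≤ (2:ℝ)^(k+2) := by
        have h7 : (2:ℝ)^(k+2) = 4*p := by rw [hpdef]; ring
        linarith
      exact (pow_le_pow_iff_right₀ (by norm_num : (1:ℝ) < 2)).1 h6
    rw [Finset.mem_Icc]
    omega

/-- The big overlap constant. -/
def Nbig (d : ℕ) : ℕ := (16*(1+18*d) + 4) * (2*(8*d*(1+18*d))+1)^d + 1

lemma overlap_count (hd : 1 ≤ d) (x : EuclideanSpace ℝ (Fin d)) :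
    {b | b ∈ Fam d ∧ x ∈ Metric.closedBall b.1 ((1+18*(d:ℝ)) * b.2)}.encard
      ≤ (Nbig d : ℕ∞) := by
  classical
  have hd1 : (1:ℝ) ≤ d := by exact_mod_cast hd
  set Cn : ℝ := 1 + 18*(d:ℝ) with hCndef
  set B : ℕ := 8*d*(1+18*d) with hB
  set G : ℕ → Set (EuclideanSpace ℝ (Fin d)) :=
    fun k => {c | c ∈ Lat d k ∧ ‖x - c‖ ≤ Cn / 2^k} with hG
  have hsub : {b | b ∈ Fam d ∧ x ∈ Metric.closedBall b.1 (Cn * b.2)} ⊆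
      insert ((0 : EuclideanSpace ℝ (Fin d)), (1:ℝ))
        ((fun c => (c, 1 / (2 * ‖c‖))) '' (⋃ k ∈ Kx d x, G k)) := by
    rintro b ⟨hbF, hbx⟩
    rcases mem_Fam_elim hbF with rfl | ⟨c, hc, rfl⟩
    · exact Set.mem_insert _ _
    · apply Set.mem_insert_of_mem
      obtain ⟨k, hlat, h1, h2⟩ := hc
      simp only [Metric.mem_closedBall, dist_eq_norm] at hbx
      have hcpos : (0:ℝ) < ‖c‖ := by
        have := Sset_norm_ge ⟨k, hlat, h1, h2⟩
        linarith
      have hball : ‖x - c‖ ≤ Cn / (2 * ‖c‖) := by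
        calc ‖x - c‖ ≤ Cn * (1 / (2 * ‖c‖)) := hbx
          _ = Cn / (2 * ‖c‖) := by ring
      refine ⟨c, Set.mem_biUnion (valid_mem_Kx hd h1 h2 hball) ⟨hlat, ?_⟩, rfl⟩
      have hpk : (1:ℝ) ≤ 2^k := one_le_pow₀ (by norm_num)
      have h2c : (2:ℝ)^k ≤ 2 * ‖c‖ := by
        have : (2:ℝ)^(k+1) = 2 * 2^k := by ring
        nlinarith
      calc ‖x - c‖ ≤ Cn / (2 * ‖c‖) := hball
        _ ≤ Cn / 2^k := by
            apply div_le_div_of_nonneg_left (by linarith) (by positivity) h2c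
  have hGcard : ∀ k, (G k).encard ≤ (((2*B+1)^d : ℕ) : ℕ∞) := by
    intro k
    apply count_latball hd k x _ B
    have hdpos : (0:ℝ) < d := by linarith
    have : (B : ℝ) * delk d k = Cn / 2^k := by
      rw [hB, hCndef]
      unfold delk
      push_cast
      field_simp
    rw [this]
  calc {b | b ∈ Fam d ∧ x ∈ Metric.closedBall b.1 (Cn * b.2)}.encard
      ≤ (insert ((0 : EuclideanSpace ℝ (Fin d)), (1:ℝ))
          ((fun c => (c, 1 / (2 * ‖c‖))) '' (⋃ k ∈ Kx d x, G k))).encard :=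
        Set.encard_mono hsub
    _ ≤ ((fun c => (c, 1 / (2 * ‖c‖))) '' (⋃ k ∈ Kx d x, G k)).encard + 1 :=
        Set.encard_insert_le _ _
    _ ≤ (⋃ k ∈ Kx d x, G k).encard + 1 := by
        gcongr
        exact Set.encard_image_le _ _
    _ ≤ (Kx d x).card * (((2*B+1)^d : ℕ) : ℕ∞) + 1 := by
        gcongr
        exact encard_biUnion_le _ _ _ hGcard
    _ ≤ ((16*(1+18*d) + 4 : ℕ) : ℕ∞) * (((2*B+1)^d : ℕ) : ℕ∞) + 1 := by
        gcongr
        exact_mod_cast Kx_card d x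
    _ = (Nbig d : ℕ∞) := by
        rw [Nbig, hB]
        push_cast
        ring

lemma tsum_le_of_encard_le {ι α : Type*} (F : Set ι) (s : ι → Set α) (x : α) (N : ℕ)
    (h : {b | b ∈ F ∧ x ∈ s b}.encard ≤ (N : ℕ∞)) :
    ∑' b : F, (s b.1).indicator (fun _ => (1:ℝ≥0∞)) x ≤ (N : ℝ≥0∞) := by
  classical
  rw [ENNReal.tsum_eq_iSup_sum]
  refine iSup_le fun t => ?_
  have hsum : ∑ b ∈ t, (s b.1).indicator (fun _ => (1:ℝ≥0∞)) x
      = ((t.filter (fun b => x ∈ s b.1)).card : ℝ≥0∞) := by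
    rw [← Finset.sum_boole]
    apply Finset.sum_congr rfl
    intro b _
    by_cases hb : x ∈ s b.1 <;> simp [Set.indicator_apply, hb]
  rw [hsum]
  have hcard : (t.filter (fun b => x ∈ s b.1)).card ≤ N := by
    have himg : (((t.filter (fun b => x ∈ s b.1)).image Subtype.val : Finset ι) : Set ι) ⊆
        {b | b ∈ F ∧ x ∈ s b} := by
      intro b hb
      simp only [Finset.coe_image, Set.mem_image, Finset.mem_coe, Finset.mem_filter] at hb
      obtain ⟨b', ⟨-, hb'2⟩, rfl⟩ := hb
      exact ⟨b'.2, hb'2⟩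
    have h1 : ((t.filter (fun b => x ∈ s b.1)).image Subtype.val).card
        = (t.filter (fun b => x ∈ s b.1)).card :=
      Finset.card_image_of_injective _ Subtype.val_injective
    have h2 : (((t.filter (fun b => x ∈ s b.1)).image Subtype.val).card : ℕ∞) ≤ (N : ℕ∞) := by
      rw [← Set.encard_coe_eq_coe_finsetCard]
      exact le_trans (Set.encard_mono himg) h
    rw [h1] at h2
    exact_mod_cast h2
  exact_mod_cast hcard

end GaussCover

open GaussCover in
/-- The covering lemma for Gaussian harmonic analysis: there is a countable family of
closed balls (recorded as center–radius pairs), containing `B(0,1)`, which covers `ℝ^d`,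
has bounded overlap, whose balls other than `B(0,1)` have centers `c_B` with
`|c_B| ≥ 1/2` and diameter `1/|c_B|`, on each of which the Gaussian density `e^{-|·|²}`
is comparable to a constant, such that for `x ∈ B` the admissible ball `B_h(x)` is
contained in the dilate `C_n·B`, and the dilated family again has bounded overlap and
Gaussian-density comparability. -/
theorem gaussian_covering_lemma (d : ℕ) (hd : 1 ≤ d) :
    ∃ (F : Set (EuclideanSpace ℝ (Fin d) × ℝ)) (N : ℕ) (c Cn : ℝ),
      F.Countable ∧
      ((0 : EuclideanSpace ℝ (Fin d)), (1 : ℝ)) ∈ F ∧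
      (∀ b ∈ F, 0 < b.2) ∧ 1 ≤ c ∧ 1 ≤ Cn ∧
      -- (i) the balls of F cover ℝ^d
      (∀ x : EuclideanSpace ℝ (Fin d), ∃ b ∈ F, x ∈ Metric.closedBall b.1 b.2) ∧
      -- (ii) bounded overlap
      (∀ x : EuclideanSpace ℝ (Fin d),
        ∑' b : F, (Metric.closedBall b.1.1 b.1.2).indicator
          (fun _ => (1 : ℝ≥0∞)) x ≤ (N : ℝ≥0∞)) ∧
      -- (iii) centers and diameters of the balls other than B(0,1)
      (∀ b ∈ F, b ≠ ((0 : EuclideanSpace ℝ (Fin d)), (1 : ℝ)) →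
        (1 / 2 : ℝ) ≤ ‖b.1‖ ∧ 2 * b.2 = 1 / ‖b.1‖) ∧
      -- (iv) the Gaussian density is essentially constant on each ball
      (∀ b ∈ F, ∀ x ∈ Metric.closedBall b.1 b.2, ∀ y ∈ Metric.closedBall b.1 b.2,
        c⁻¹ * Real.exp (-‖y‖ ^ 2) ≤ Real.exp (-‖x‖ ^ 2) ∧
          Real.exp (-‖x‖ ^ 2) ≤ c * Real.exp (-‖y‖ ^ 2)) ∧
      -- (v) admissible balls of points of B are contained in the dilate Cn·B
      (∀ b ∈ F, ∀ x ∈ Metric.closedBall b.1 b.2,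
        {y : EuclideanSpace ℝ (Fin d) | ‖x - y‖ ≤ (d : ℝ) * min 1 (1 / ‖x‖)} ⊆
          Metric.closedBall b.1 (Cn * b.2)) ∧
      -- (vi) the dilated family has bounded overlap ...
      (∃ N' : ℕ, ∀ x : EuclideanSpace ℝ (Fin d),
        ∑' b : F, (Metric.closedBall b.1.1 (Cn * b.1.2)).indicator
          (fun _ => (1 : ℝ≥0∞)) x ≤ (N' : ℝ≥0∞)) ∧
      -- ... and satisfies the Gaussian-density comparability of (iv)
      (∃ c' : ℝ, 1 ≤ c' ∧ ∀ b ∈ F, ∀ x ∈ Metric.closedBall b.1 (Cn * b.2),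
        ∀ y ∈ Metric.closedBall b.1 (Cn * b.2),
          c'⁻¹ * Real.exp (-‖y‖ ^ 2) ≤ Real.exp (-‖x‖ ^ 2) ∧
            Real.exp (-‖x‖ ^ 2) ≤ c' * Real.exp (-‖y‖ ^ 2)) := by
  have hd1 : (1:ℝ) ≤ d := by exact_mod_cast hd
  have hCn1 : (1:ℝ) ≤ 1 + 18*(d:ℝ) := by linarith
  refine ⟨Fam d, Nbig d, Real.exp 6, 1 + 18*(d:ℝ), Fam_countable d, Set.mem_insert _ _,
    ?_, ?_, hCn1, Fam_cover hd, ?_, ?_, ?_, ?_, ⟨Nbig d, ?_⟩, ?_⟩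
  · -- positivity of radii
    intro b hb
    rcases mem_Fam_elim hb with rfl | ⟨c, hc, rfl⟩
    · norm_num
    · exact Sset_radius_pos hc
  · -- 1 ≤ exp 6
    have := Real.add_one_le_exp (6:ℝ)
    linarith
  · -- (ii) bounded overlap for the undilated family
    intro x
    apply tsum_le_of_encard_le (Fam d) (fun b => Metric.closedBall b.1 b.2) x (Nbig d)
    refine le_trans (Set.encard_mono ?_) (overlap_count hd x)
    rintro b ⟨hbF, hbx⟩
    refine ⟨hbF, ?_⟩
    refine Metric.closedBall_subset_closedBall ?_ hbx
    have hpos : 0 < b.2 := by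
      rcases mem_Fam_elim hbF with rfl | ⟨c, hc, rfl⟩
      · norm_num
      · exact Sset_radius_pos hc
    nlinarith
  · -- (iii)
    intro b hb hne
    rcases mem_Fam_elim hb with rfl | ⟨c, hc, rfl⟩
    · exact absurd rfl hne
    · have h1 := Sset_norm_ge hc
      constructor
      · simpa using le_trans (by norm_num) h1
      · have hne0 : ‖c‖ ≠ 0 := ne_of_gt (by linarith)
        simp only
        field_simp
  · -- (iv)
    intro b hb x hx y hy
    have h := Fam_gauss hd hb (le_refl (1:ℝ)) (by simpa using hx) (by simpa using hy)
    simpa using h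
  · -- (v)
    intro b hb x hx
    exact Fam_admissible hd hb hx
  · -- (vi) overlap
    intro x
    exact tsum_le_of_encard_le (Fam d) (fun b => Metric.closedBall b.1 ((1 + 18*(d:ℝ)) * b.2))
      x (Nbig d) (overlap_count hd x)
  · -- (vi) gaussian
    refine ⟨Real.exp (6 * (1 + 18*(d:ℝ))^2), ?_, ?_⟩
    · have := Real.add_one_le_exp (6 * (1 + 18*(d:ℝ))^2)
      nlinarith
    · intro b hb x hx y hy
      exact Fam_gauss hd hb hCn1 hx hy
end

section
/- Let d ≥ 1. There exists a constant C_d > 0 such that for every s ∈ (0,1] and all x, y ∈ ℝ^d with |x − y| ≤ d·min(1, 1/|x|), one has exp(−|√(1−s)·x − y|²/s) ≤ C_d exp(−|x − y|²/s). -/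
open MeasureTheory Metric Set ENNReal

/-- Estimate for the Ornstein–Uhlenbeck kernel on the local region: if `y` lies in the
admissible ball `B_h(x)`, then `exp(-|√(1-s)x - y|²/s) ≤ C_d exp(-|x-y|²/s)`. -/
theorem ou_kernel_local_bound (d : ℕ) (hd : 1 ≤ d) :
    ∃ C : ℝ, 0 < C ∧ ∀ s : ℝ, 0 < s → s ≤ 1 →
      ∀ x y : EuclideanSpace ℝ (Fin d),
        ‖x - y‖ ≤ (d : ℝ) * min 1 (1 / ‖x‖) →
        Real.exp (-‖Real.sqrt (1 - s) • x - y‖ ^ 2 / s) ≤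
          C * Real.exp (-‖x - y‖ ^ 2 / s) := by
  refine ⟨Real.exp (2 * d), Real.exp_pos _, fun s hs hs1 x y hxy => ?_⟩
  rw [← Real.exp_add, Real.exp_le_exp]
  have h1s : (0:ℝ) ≤ 1 - s := by linarith
  set t : ℝ := 1 - Real.sqrt (1 - s) with ht
  have ht0 : 0 ≤ t := by
    have h := Real.sqrt_le_one.mpr (by linarith : (1:ℝ) - s ≤ 1)
    simp only [ht]; linarith
  have hts : t ≤ s := by
    have h : 1 - s ≤ Real.sqrt (1 - s) := by
      nlinarith [Real.sq_sqrt h1s, Real.sqrt_nonneg (1 - s)]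
    simp only [ht]; linarith
  have key : Real.sqrt (1 - s) • x - y = (x - y) - t • x := by
    simp only [ht, sub_smul, one_smul]; abel
  rw [key]
  have hbx : ‖x - y‖ * ‖x‖ ≤ (d : ℝ) := by
    rcases eq_or_lt_of_le (norm_nonneg x) with hx | hx
    · rw [← hx, mul_zero]; positivity
    · have h1 : ‖x - y‖ ≤ (d : ℝ) * (1 / ‖x‖) :=
        hxy.trans (by gcongr; exact min_le_right _ _)
      calc ‖x - y‖ * ‖x‖ ≤ ((d : ℝ) * (1 / ‖x‖)) * ‖x‖ := by gcongr
        _ = (d : ℝ) := by field_simp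
  have hexp : ‖(x - y) - t • x‖ ^ 2 =
      ‖x - y‖ ^ 2 - 2 * (t * inner ℝ (x - y) x) + t ^ 2 * ‖x‖ ^ 2 := by
    rw [@norm_sub_sq_real, real_inner_smul_right, norm_smul, Real.norm_eq_abs,
      abs_of_nonneg ht0, mul_pow]
  have hinner : inner ℝ (x - y) x ≤ ‖x - y‖ * ‖x‖ := real_inner_le_norm _ _
  have hnum : ‖x - y‖ ^ 2 - ‖(x - y) - t • x‖ ^ 2 ≤ 2 * (d : ℝ) * s := by
    rw [hexp]
    nlinarith [sq_nonneg (t * ‖x‖), norm_nonneg x]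
  have hdiv : (-‖(x - y) - t • x‖ ^ 2) / s - (-‖x - y‖ ^ 2) / s ≤ 2 * (d : ℝ) := by
    rw [div_sub_div_same, div_le_iff₀ hs]
    nlinarith
  linarith
end

section
/- Let d ≥ 1 and α > 0, and set P(x,y) = |x + y|^d e^{−α |x+y| |x−y|} for x, y ∈ ℝ^d. Then there exists a constant C > 0, depending only on d and α, such that for every x ∈ ℝ^d, ∫_{{y : |y − x| > 1/2}} P(x,y) dy ≤ C; by symmetry of P in x and y, the same bound holds for the integral in x over {x : |y − x| > 1/2} for every fixed y. -/
open MeasureTheory Metric Set ENNReal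

/-- Polynomial times decaying exponential is bounded by a Japanese-bracket power. -/
lemma P_kernel_aux_pointwise (d : ℕ) (c : ℝ) (hc : 0 < c) (t : ℝ) (ht : 0 ≤ t) :
    t ^ d * Real.exp (-(c * t)) ≤
      ((Nat.factorial (2 * d + 1) : ℝ) * Real.exp c / c ^ (2 * d + 1)) *
        (1 + t) ^ (-(d + 1 : ℝ)) := by
  have h1 : (0 : ℝ) < 1 + t := by linarith
  have hrpow : (1 + t) ^ (-(d + 1 : ℝ)) = ((1 + t) ^ (d + 1 : ℕ))⁻¹ := by
    rw [← Real.rpow_natCast (1 + t) (d + 1), ← Real.rpow_neg h1.le]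
    norm_num
  rw [hrpow, ← div_eq_mul_inv, le_div_iff₀ (by positivity)]
  -- key : (c*(1+t))^(2d+1) / (2d+1)! ≤ exp (c*(1+t))
  have key : (c * (1 + t)) ^ (2 * d + 1) / (Nat.factorial (2 * d + 1) : ℝ) ≤
      Real.exp (c * (1 + t)) :=
    Real.pow_div_factorial_le_exp (x := c * (1 + t)) (by positivity) _
  have h2 : (1 + t) ^ (2 * d + 1) ≤
      (Nat.factorial (2 * d + 1) : ℝ) * Real.exp (c * (1 + t)) / c ^ (2 * d + 1) := by
    rw [le_div_iff₀ (by positivity)]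
    calc (1 + t) ^ (2 * d + 1) * c ^ (2 * d + 1) = (c * (1 + t)) ^ (2 * d + 1) := by
          rw [mul_pow]; ring
      _ ≤ (Nat.factorial (2 * d + 1) : ℝ) * Real.exp (c * (1 + t)) := by
          rw [div_le_iff₀ (by positivity : (0:ℝ) < (Nat.factorial (2 * d + 1) : ℝ))] at key
          linarith [key]
  have h3 : t ^ d * (1 + t) ^ (d + 1) ≤ (1 + t) ^ (2 * d + 1) := by
    have : t ^ d ≤ (1 + t) ^ d := pow_le_pow_left₀ ht (by linarith) d
    calc t ^ d * (1 + t) ^ (d + 1) ≤ (1 + t) ^ d * (1 + t) ^ (d + 1) := by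
          apply mul_le_mul_of_nonneg_right this (by positivity)
      _ = (1 + t) ^ (2 * d + 1) := by rw [← pow_add]; ring_nf
  have hexp : Real.exp (c * (1 + t)) * Real.exp (-(c * t)) = Real.exp c := by
    rw [← Real.exp_add]; ring_nf
  calc t ^ d * Real.exp (-(c * t)) * (1 + t) ^ (d + 1)
      = t ^ d * (1 + t) ^ (d + 1) * Real.exp (-(c * t)) := by ring
    _ ≤ (1 + t) ^ (2 * d + 1) * Real.exp (-(c * t)) :=
        mul_le_mul_of_nonneg_right h3 (Real.exp_pos _).le
    _ ≤ ((Nat.factorial (2 * d + 1) : ℝ) * Real.exp (c * (1 + t)) / c ^ (2 * d + 1)) *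
          Real.exp (-(c * t)) :=
        mul_le_mul_of_nonneg_right h2 (Real.exp_pos _).le
    _ = (Nat.factorial (2 * d + 1) : ℝ) * Real.exp c / c ^ (2 * d + 1) := by
        rw [div_mul_eq_mul_div, mul_assoc, hexp]

/-- Uniform bound for the kernel integral, one-sided version. -/
lemma P_kernel_aux (d : ℕ) (hd : 1 ≤ d) (α : ℝ) (hα : 0 < α) :
    ∃ C : ℝ, 0 < C ∧
      ∀ v : EuclideanSpace ℝ (Fin d),
        ∫⁻ w in {w : EuclideanSpace ℝ (Fin d) | 1 / 2 < ‖w - v‖},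
            ENNReal.ofReal (‖v + w‖ ^ d * Real.exp (-α * (‖v + w‖ * ‖v - w‖))) ≤
          ENNReal.ofReal C := by
  set E := EuclideanSpace ℝ (Fin d)
  set c : ℝ := α / 2 with hc_def
  have hc : 0 < c := by positivity
  set K : ℝ := (Nat.factorial (2 * d + 1) : ℝ) * Real.exp c / c ^ (2 * d + 1) with hK_def
  have hK : 0 < K := by positivity
  set I : ℝ≥0∞ := ∫⁻ z : E, ENNReal.ofReal ((1 + ‖z‖) ^ (-(d + 1 : ℝ))) with hI_def
  have hI : I < ∞ := by
    apply finite_integral_one_add_norm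
    rw [finrank_euclideanSpace_fin]
    linarith
  set J : ℝ≥0∞ := ENNReal.ofReal K * I with hJ_def
  have hJ : J ≠ ∞ := ENNReal.mul_ne_top ENNReal.ofReal_ne_top hI.ne
  refine ⟨J.toReal + 1, by positivity, fun v => ?_⟩
  have hS : MeasurableSet {w : E | 1 / 2 < ‖w - v‖} :=
    (isOpen_lt continuous_const ((continuous_id.sub continuous_const).norm)).measurableSet
  calc ∫⁻ w in {w : E | 1 / 2 < ‖w - v‖},
        ENNReal.ofReal (‖v + w‖ ^ d * Real.exp (-α * (‖v + w‖ * ‖v - w‖)))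
      ≤ ∫⁻ w in {w : E | 1 / 2 < ‖w - v‖},
          ENNReal.ofReal (‖v + w‖ ^ d * Real.exp (-(c * ‖v + w‖))) := by
        apply setLIntegral_mono' hS
        intro w hw
        apply ENNReal.ofReal_le_ofReal
        apply mul_le_mul_of_nonneg_left _ (by positivity)
        apply Real.exp_le_exp.mpr
        have h1 : ‖v - w‖ = ‖w - v‖ := norm_sub_rev _ _
        have h2 : (1:ℝ)/2 < ‖w - v‖ := hw
        have h3 : (0:ℝ) ≤ ‖v + w‖ := norm_nonneg _
        rw [neg_mul]
        apply neg_le_neg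
        rw [h1, hc_def]
        nlinarith [mul_nonneg (mul_nonneg hα.le h3) (by linarith : (0:ℝ) ≤ ‖w - v‖ - 1/2)]
    _ ≤ ∫⁻ w : E, ENNReal.ofReal (‖v + w‖ ^ d * Real.exp (-(c * ‖v + w‖))) :=
        setLIntegral_le_lintegral _ _
    _ = ∫⁻ z : E, ENNReal.ofReal (‖z‖ ^ d * Real.exp (-(c * ‖z‖))) :=
        lintegral_add_left_eq_self
          (fun z : E => ENNReal.ofReal (‖z‖ ^ d * Real.exp (-(c * ‖z‖)))) v
    _ ≤ ∫⁻ z : E, ENNReal.ofReal K * ENNReal.ofReal ((1 + ‖z‖) ^ (-(d + 1 : ℝ))) := by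
        apply lintegral_mono
        intro z
        exact (ENNReal.ofReal_le_ofReal
          (P_kernel_aux_pointwise d c hc ‖z‖ (norm_nonneg _))).trans
          (ENNReal.ofReal_mul hK.le).le
    _ = J := lintegral_const_mul' _ _ ENNReal.ofReal_ne_top
    _ ≤ ENNReal.ofReal (J.toReal + 1) := by
        conv_lhs => rw [← ENNReal.ofReal_toReal hJ]
        exact ENNReal.ofReal_le_ofReal (by linarith)

/-- For `P(x,y) = |x+y|^d e^{-α|x+y||x-y|}` with `α > 0`, the integral of `P(x,·)` over
`{y : |y-x| > 1/2}` is bounded by a constant depending only on `d` and `α`, uniformly in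
`x`; by symmetry the same holds for the integral in `x` for fixed `y`. -/
theorem P_kernel_integrable (d : ℕ) (hd : 1 ≤ d) (α : ℝ) (hα : 0 < α) :
    ∃ C : ℝ, 0 < C ∧
      (∀ x : EuclideanSpace ℝ (Fin d),
        ∫⁻ y in {y : EuclideanSpace ℝ (Fin d) | 1 / 2 < ‖y - x‖},
            ENNReal.ofReal (‖x + y‖ ^ d * Real.exp (-α * (‖x + y‖ * ‖x - y‖))) ≤
          ENNReal.ofReal C) ∧
      (∀ y : EuclideanSpace ℝ (Fin d),
        ∫⁻ x in {x : EuclideanSpace ℝ (Fin d) | 1 / 2 < ‖y - x‖},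
            ENNReal.ofReal (‖x + y‖ ^ d * Real.exp (-α * (‖x + y‖ * ‖x - y‖))) ≤
          ENNReal.ofReal C) := by
  obtain ⟨C, hC, h⟩ := P_kernel_aux d hd α hα
  refine ⟨C, hC, fun x => h x, fun y => ?_⟩
  have := h y
  have hset : {x : EuclideanSpace ℝ (Fin d) | 1 / 2 < ‖y - x‖}
      = {w : EuclideanSpace ℝ (Fin d) | 1 / 2 < ‖w - y‖} := by
    ext w; simp [norm_sub_rev y w]
  rw [hset]
  convert this using 3 with w
  rw [add_comm, norm_sub_rev]
end

section
/- Let d ≥ 1. There exists a constant C_d > 0 such that for every s ∈ (0,1) and all x, y ∈ ℝ^d with ⟨x, y⟩ > 0 and |x − y| > d·min(1, 1/|x|), one has (πs)^{−d/2} exp(−|√(1−s)·x − y|²/s) ≤ C_d · t₀^{−d/2} e^{−u₀}, where a = |x|² + |y|², b = 2⟨x,y⟩, t₀ = 2√(a² − b²)/(a + √(a² − b²)), and u₀ = (1/2)(|y|² − |x|² + |x + y| |x − y|). -/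
open MeasureTheory Metric Set ENNReal
open scoped RealInnerProductSpace

lemma ou_core (d : ℕ) (s T D : ℝ) (hs : 0 < s) (hT : 0 < T) (hD : 0 ≤ D)
    (hD2 : s < T/2 → T/(16*s) ≤ D) :
    s ^ (-(d:ℝ)/2) * Real.exp (-D) ≤ (d.factorial * 16^d : ℝ) * T ^ (-(d:ℝ)/2) := by
  have hfac : (1:ℝ) ≤ d.factorial := by exact_mod_cast Nat.one_le_iff_ne_zero.mpr d.factorial_ne_zero
  rcases lt_or_ge s (T/2) with hcase | hcase
  · -- small s
    have hX : 0 < T/(16*s) := by positivity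
    have h1 : Real.exp (-D) ≤ (d.factorial : ℝ) / (T/(16*s))^d := by
      rw [Real.exp_neg,
        show (d.factorial : ℝ) / (T/(16*s))^d = ((T/(16*s))^d / (d.factorial : ℝ))⁻¹ by
          rw [inv_div]]
      have h2 : (T/(16*s))^d / (d.factorial : ℝ) ≤ Real.exp D :=
        (Real.pow_div_factorial_le_exp _ hX.le d).trans (Real.exp_le_exp.mpr (hD2 hcase))
      gcongr
    have hsd : 0 < s ^ (-(d:ℝ)/2) := Real.rpow_pos_of_pos hs _
    calc s ^ (-(d:ℝ)/2) * Real.exp (-D)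
        ≤ s ^ (-(d:ℝ)/2) * ((d.factorial : ℝ) / (T/(16*s))^d) :=
          mul_le_mul_of_nonneg_left h1 hsd.le
      _ = (d.factorial * 16^d : ℝ) * (s ^ (-(d:ℝ)/2) * s^d / T^d) := by
          rw [div_pow, mul_pow]
          field_simp
      _ = (d.factorial * 16^d : ℝ) * (s ^ ((d:ℝ)/2) / T^d) := by
          rw [← Real.rpow_natCast s d, ← Real.rpow_add hs,
            show -(d:ℝ)/2 + (d:ℝ) = (d:ℝ)/2 by ring]
      _ ≤ (d.factorial * 16^d : ℝ) * (T ^ ((d:ℝ)/2) / T^d) := by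
          have hsT : s ≤ T := by linarith
          have h5 := Real.rpow_le_rpow hs.le hsT (by positivity : (0:ℝ) ≤ (d:ℝ)/2)
          gcongr
      _ = (d.factorial * 16^d : ℝ) * T ^ (-(d:ℝ)/2) := by
          rw [← Real.rpow_natCast T d, ← Real.rpow_sub hT,
            show (d:ℝ)/2 - (d:ℝ) = -(d:ℝ)/2 by ring]
  · -- large s
    have h1 : Real.exp (-D) ≤ 1 := Real.exp_le_one_iff.mpr (by linarith)
    have h2 : s ^ (-(d:ℝ)/2) ≤ (T/2) ^ (-(d:ℝ)/2) :=
      Real.rpow_le_rpow_of_nonpos (by positivity) hcase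
        (by have : (0:ℝ) ≤ (d:ℝ) := Nat.cast_nonneg d; linarith)
    have h3 : (T/2) ^ (-(d:ℝ)/2) = 2 ^ ((d:ℝ)/2) * T ^ (-(d:ℝ)/2) := by
      rw [Real.div_rpow hT.le (by norm_num : (0:ℝ) ≤ 2), div_eq_mul_inv,
        ← Real.rpow_neg (by norm_num : (0:ℝ) ≤ 2),
        show -(-(d:ℝ)/2) = (d:ℝ)/2 by ring, mul_comm]
    have h4 : (2:ℝ) ^ ((d:ℝ)/2) ≤ (d.factorial * 16^d : ℝ) := by
      have e1 : (2:ℝ) ^ ((d:ℝ)/2) ≤ (2:ℝ) ^ (((4*d : ℕ)):ℝ) := by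
        apply Real.rpow_le_rpow_of_exponent_le one_le_two
        push_cast
        have : (0:ℝ) ≤ (d:ℝ) := Nat.cast_nonneg d
        linarith
      have e2 : (2:ℝ) ^ (((4*d : ℕ)):ℝ) = (16:ℝ)^d := by
        rw [Real.rpow_natCast, pow_mul]
        norm_num
      calc (2:ℝ) ^ ((d:ℝ)/2) ≤ (16:ℝ)^d := e1.trans_eq e2
        _ ≤ (d.factorial * 16^d : ℝ) := le_mul_of_one_le_left (by positivity) hfac
    have hTe : (0:ℝ) ≤ T ^ (-(d:ℝ)/2) := (Real.rpow_pos_of_pos hT _).le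
    calc s ^ (-(d:ℝ)/2) * Real.exp (-D)
        ≤ (T/2) ^ (-(d:ℝ)/2) * 1 := by
          apply mul_le_mul h2 h1 (Real.exp_pos _).le (by positivity)
      _ = 2 ^ ((d:ℝ)/2) * T ^ (-(d:ℝ)/2) := by rw [mul_one, h3]
      _ ≤ (d.factorial * 16^d : ℝ) * T ^ (-(d:ℝ)/2) := mul_le_mul_of_nonneg_right h4 hTe

set_option maxHeartbeats 1000000 in
/-- Estimate for the Ornstein–Uhlenbeck kernel on the global region when `b = 2⟨x,y⟩ > 0`:
`(πs)^{-d/2} exp(-|√(1-s)x - y|²/s) ≤ C_d t₀^{-d/2} e^{-u₀}`, where `a = |x|² + |y|²`,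
`b = 2⟨x,y⟩`, `t₀ = 2√(a² - b²)/(a + √(a² - b²))` and
`u₀ = (1/2)(|y|² - |x|² + |x+y||x-y|)`. -/
theorem ou_kernel_global_bound_b_pos (d : ℕ) (hd : 1 ≤ d) :
    ∃ C : ℝ, 0 < C ∧ ∀ s : ℝ, 0 < s → s < 1 →
      ∀ x y : EuclideanSpace ℝ (Fin d), 0 < ⟪x, y⟫ →
        (d : ℝ) * min 1 (1 / ‖x‖) < ‖x - y‖ →
        (Real.pi * s) ^ (-(d : ℝ) / 2) *
            Real.exp (-‖Real.sqrt (1 - s) • x - y‖ ^ 2 / s) ≤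
          C * (2 * Real.sqrt ((‖x‖ ^ 2 + ‖y‖ ^ 2) ^ 2 - (2 * ⟪x, y⟫) ^ 2) /
                ((‖x‖ ^ 2 + ‖y‖ ^ 2) +
                  Real.sqrt ((‖x‖ ^ 2 + ‖y‖ ^ 2) ^ 2 - (2 * ⟪x, y⟫) ^ 2))) ^
              (-(d : ℝ) / 2) *
            Real.exp (-(1 / 2 * (‖y‖ ^ 2 - ‖x‖ ^ 2 + ‖x + y‖ * ‖x - y‖))) := by
  refine ⟨(d.factorial * 16^d : ℝ), by positivity, ?_⟩
  intro s hs hs1 x y hbpos hreg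
  obtain ⟨b, hb_def⟩ : ∃ t : ℝ, t = 2 * ⟪x, y⟫ := ⟨_, rfl⟩
  obtain ⟨a, ha_def⟩ : ∃ t : ℝ, t = ‖x‖ ^ 2 + ‖y‖ ^ 2 := ⟨_, rfl⟩
  obtain ⟨S, hS_def⟩ : ∃ t : ℝ, t = Real.sqrt (a ^ 2 - b ^ 2) := ⟨_, rfl⟩
  obtain ⟨c, hc_def⟩ : ∃ t : ℝ, t = Real.sqrt (1 - s) := ⟨_, rfl⟩
  rw [← hb_def, ← ha_def, ← hS_def, ← hc_def]
  -- basic facts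
  have hx0 : x ≠ 0 := by
    rintro rfl
    simp at hbpos
  have hnx : 0 < ‖x‖ := norm_pos_iff.mpr hx0
  have hb0 : 0 < b := by rw [hb_def]; linarith
  have hadd : ‖x + y‖ ^ 2 = a + b := by
    rw [norm_add_sq_real, ha_def, hb_def]; ring
  have hsub : ‖x - y‖ ^ 2 = a - b := by
    rw [norm_sub_sq_real, ha_def, hb_def]; ring
  have hble : b ≤ a := by
    have h1 : ⟪x, y⟫ ≤ ‖x‖ * ‖y‖ := real_inner_le_norm x y
    rw [hb_def, ha_def]
    nlinarith [sq_nonneg (‖x‖ - ‖y‖)]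
  have hab2 : a ^ 2 - b ^ 2 = (‖x + y‖ * ‖x - y‖) ^ 2 := by
    rw [mul_pow, hadd, hsub]; ring
  have hSval : S = ‖x + y‖ * ‖x - y‖ := by
    rw [hS_def, hab2, Real.sqrt_sq (by positivity)]
  have hS0 : 0 ≤ S := by rw [hS_def]; exact Real.sqrt_nonneg _
  have hS2 : S ^ 2 = a ^ 2 - b ^ 2 := by
    rw [hS_def]; exact Real.sq_sqrt (by nlinarith)
  have hd1 : (1:ℝ) ≤ (d:ℝ) := by exact_mod_cast hd
  -- S > 1
  have hS1 : 1 < S := by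
    rw [hSval]
    rcases le_or_gt ‖x‖ 1 with hx1 | hx1
    · have hmin : min 1 (1 / ‖x‖) = 1 :=
        min_eq_left (by rw [le_div_iff₀ hnx]; linarith)
      rw [hmin, mul_one] at hreg
      have hxy1 : 1 < ‖x - y‖ := by linarith
      have hlt : ‖x - y‖ < ‖x + y‖ := by
        nlinarith [norm_nonneg (x + y), norm_nonneg (x - y)]
      nlinarith
    · have hmin : min 1 (1 / ‖x‖) = 1 / ‖x‖ :=
        min_eq_right (by rw [div_le_one hnx]; linarith)
      rw [hmin] at hreg
      have hreg' : (d:ℝ) < ‖x - y‖ * ‖x‖ := by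
        rw [mul_one_div, div_lt_iff₀ hnx] at hreg
        exact hreg
      have hxy0 : 0 < ‖x - y‖ := by
        have h9 : (0:ℝ) < (d:ℝ) * (1/‖x‖) := mul_pos (by linarith) (by positivity)
        linarith
      have hxpx : ‖x‖ < ‖x + y‖ := by
        nlinarith [norm_nonneg (x + y), sq_nonneg ‖y‖]
      nlinarith
  have hSa : S < a := by nlinarith [mul_pos hb0 hb0]
  have ha : 0 < a := by rw [ha_def]; positivity
  have haS : 0 < a + S := by linarith
  obtain ⟨T, hT_def⟩ : ∃ t : ℝ, t = 2 * S / (a + S) := ⟨_, rfl⟩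
  rw [← hT_def]
  have hT0 : 0 < T := by
    rw [hT_def]; exact div_pos (by linarith) haS
  have hT1 : T < 1 := by rw [hT_def, div_lt_one haS]; linarith
  obtain ⟨c₀, hc0_def⟩ : ∃ t : ℝ, t = b / (a + S) := ⟨_, rfl⟩
  have hT' : T * (a + S) = 2 * S := by rw [hT_def]; field_simp
  have h2 : c₀ * (a + S) = b := by rw [hc0_def]; field_simp
  have hc₀b : b * c₀ = a - S := by
    rw [hc0_def, ← mul_div_assoc, div_eq_iff haS.ne']
    linear_combination hS2
  have hc₀0 : 0 < c₀ := by rw [hc0_def]; exact div_pos hb0 haS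
  have hc₀1 : c₀ < 1 := by rw [hc0_def, div_lt_one haS]; linarith
  have hc2 : c ^ 2 = 1 - s := by rw [hc_def]; exact Real.sq_sqrt (by linarith)
  have hc0 : 0 ≤ c := by rw [hc_def]; exact Real.sqrt_nonneg _
  have hcle1 : c ≤ 1 := by nlinarith
  have hc₀sq : c₀ ^ 2 = 1 - T := by
    have h4 : (c₀ ^ 2 - (1 - T)) * (a + S) = 0 := by linear_combination c₀ * h2 + hc₀b + hT'
    rcases mul_eq_zero.mp h4 with h | h
    · linarith
    · exact absurd h haS.ne'
  -- the quadratic form identity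
  have hQ : ‖c • x - y‖ ^ 2 = c ^ 2 * ‖x‖ ^ 2 + ‖y‖ ^ 2 - b * c := by
    rw [norm_sub_sq_real, norm_smul, real_inner_smul_left, mul_pow, hb_def]
    rw [Real.norm_eq_abs, abs_of_nonneg hc0]
    ring
  have hsq : (a + S) * (c - c₀) ^ 2 = (a + S) * c ^ 2 - 2 * b * c + (a - S) := by
    linear_combination (c₀ - 2 * c) * h2 + hc₀b
  have hnum : 2 * (c ^ 2 * ‖x‖ ^ 2 + ‖y‖ ^ 2 - b * c) =
      s * (‖y‖ ^ 2 - ‖x‖ ^ 2 + S) + (a + S) * (c - c₀) ^ 2 := by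
    rw [hsq, ha_def]
    have hs' : s = 1 - c ^ 2 := by linarith
    rw [hs']
    ring
  obtain ⟨D, hD_def⟩ : ∃ t : ℝ, t = (a + S) * (c - c₀) ^ 2 / (2 * s) := ⟨_, rfl⟩
  have hD0 : 0 ≤ D := by
    rw [hD_def]
    exact div_nonneg (mul_nonneg haS.le (sq_nonneg _)) (by linarith)
  have hQs : ‖c • x - y‖ ^ 2 / s = 1 / 2 * (‖y‖ ^ 2 - ‖x‖ ^ 2 + S) + D := by
    rw [hQ, hD_def]
    field_simp
    linear_combination hnum
  -- bound on D for small s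
  have hD2 : s < T / 2 → T / (16 * s) ≤ D := by
    intro hsT
    have hcc : (c - c₀) * (c + c₀) = T - s := by
      have h1 : c ^ 2 - c₀ ^ 2 = T - s := by rw [hc2, hc₀sq]; ring
      linear_combination h1
    have h5 : (c + c₀) ^ 2 ≤ 4 := by
      calc (c + c₀) ^ 2 ≤ 2 ^ 2 := pow_le_pow_left₀ (by linarith) (by linarith) 2
        _ = 4 := by norm_num
    have h41 : (T - s) ^ 2 = (c - c₀) ^ 2 * (c + c₀) ^ 2 := by
      rw [← mul_pow, hcc]
    have h4 : (T - s) ^ 2 ≤ 4 * (c - c₀) ^ 2 := by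
      calc (T - s) ^ 2 = (c - c₀) ^ 2 * (c + c₀) ^ 2 := h41
        _ ≤ (c - c₀) ^ 2 * 4 := mul_le_mul_of_nonneg_left h5 (sq_nonneg _)
        _ = 4 * (c - c₀) ^ 2 := by ring
    have h61 : T ≤ 2 * (T - s) := by linarith
    have h6 : T ^ 2 ≤ 16 * (c - c₀) ^ 2 := by
      calc T ^ 2 ≤ (2 * (T - s)) ^ 2 := pow_le_pow_left₀ hT0.le h61 2
        _ = 4 * (T - s) ^ 2 := by ring
        _ ≤ 4 * (4 * (c - c₀) ^ 2) := by linarith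
        _ = 16 * (c - c₀) ^ 2 := by ring
    have e2 : (a + S) * T ^ 2 ≤ (a + S) * (16 * (c - c₀) ^ 2) :=
      mul_le_mul_of_nonneg_left h6 haS.le
    have e3 : (a + S) * T ^ 2 = 2 * S * T := by linear_combination T * hT'
    have e4 : 2 * T ≤ 2 * S * T := by
      have e41 : 1 * T ≤ S * T := mul_le_mul_of_nonneg_right hS1.le hT0.le
      linarith
    have e5 : 2 * T ≤ (a + S) * (16 * (c - c₀) ^ 2) := by linarith
    rw [hD_def, div_le_div_iff₀ (by linarith : (0:ℝ) < 16 * s) (by linarith : (0:ℝ) < 2 * s)]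
    calc T * (2 * s) = s * (2 * T) := by ring
      _ ≤ s * ((a + S) * (16 * (c - c₀) ^ 2)) := mul_le_mul_of_nonneg_left e5 hs.le
      _ = (a + S) * (c - c₀) ^ 2 * (16 * s) := by ring
  -- assemble
  have hcore := ou_core d s T D hs hT0 hD0 hD2
  rw [← hSval]
  have hsplit : (Real.pi * s) ^ (-(d:ℝ)/2) =
      Real.pi ^ (-(d:ℝ)/2) * s ^ (-(d:ℝ)/2) :=
    Real.mul_rpow Real.pi_pos.le hs.le
  have hpil : Real.pi ^ (-(d:ℝ)/2) ≤ 1 :=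
    Real.rpow_le_one_of_one_le_of_nonpos (by linarith [Real.pi_gt_three])
      (by linarith)
  have hexp : Real.exp (-‖c • x - y‖ ^ 2 / s) =
      Real.exp (-(1 / 2 * (‖y‖ ^ 2 - ‖x‖ ^ 2 + S))) * Real.exp (-D) := by
    rw [← Real.exp_add, neg_div, hQs]
    ring_nf
  rw [hsplit, hexp]
  have hpos1 : 0 ≤ s ^ (-(d:ℝ)/2) := (Real.rpow_pos_of_pos hs _).le
  have hpos2 : 0 ≤ Real.exp (-(1 / 2 * (‖y‖ ^ 2 - ‖x‖ ^ 2 + S))) := (Real.exp_pos _).le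
  calc Real.pi ^ (-(d:ℝ)/2) * s ^ (-(d:ℝ)/2) *
        (Real.exp (-(1 / 2 * (‖y‖ ^ 2 - ‖x‖ ^ 2 + S))) * Real.exp (-D))
      ≤ 1 * (s ^ (-(d:ℝ)/2) *
        (Real.exp (-(1 / 2 * (‖y‖ ^ 2 - ‖x‖ ^ 2 + S))) * Real.exp (-D))) := by
        rw [mul_assoc]
        exact mul_le_mul_of_nonneg_right hpil
          (mul_nonneg hpos1 (by positivity))
    _ = (s ^ (-(d:ℝ)/2) * Real.exp (-D)) *
        Real.exp (-(1 / 2 * (‖y‖ ^ 2 - ‖x‖ ^ 2 + S))) := by ring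
    _ ≤ ((d.factorial * 16^d : ℝ) * T ^ (-(d:ℝ)/2)) *
        Real.exp (-(1 / 2 * (‖y‖ ^ 2 - ‖x‖ ^ 2 + S))) :=
        mul_le_mul_of_nonneg_right hcore hpos2
    _ = (d.factorial * 16^d : ℝ) * T ^ (-(d:ℝ)/2) *
        Real.exp (-(1 / 2 * (‖y‖ ^ 2 - ‖x‖ ^ 2 + S))) := by ring
end

section
/- Let p : ℝ^d → [1,∞) be measurable and suppose p(·) ∈ 𝒫^∞_{γ_d}(ℝ^d) with constants C_{γ_d} > 0 and p_∞ ≥ 1. Then for all x, y ∈ ℝ^d, | ( |y|²/p(y) − |x|²/p(x) ) − ( |y|² − |x|² )/p_∞ | ≤ 2 C_{γ_d}; consequently e^{−2C_{γ_d}} e^{(|y|² − |x|²)/p_∞} ≤ e^{|y|²/p(y) − |x|²/p(x)} ≤ e^{2C_{γ_d}} e^{(|y|² − |x|²)/p_∞}. -/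
open MeasureTheory Metric Set ENNReal

/-- If `p(·) ∈ 𝒫^∞_{γ_d}(ℝ^d)` with constants `C_{γ_d} > 0` and `p_∞ ≥ 1`, then for all
`x, y`, `|(|y|²/p(y) - |x|²/p(x)) - (|y|² - |x|²)/p_∞| ≤ 2C_{γ_d}`, and consequently
`e^{-2C_{γ_d}} e^{(|y|²-|x|²)/p_∞} ≤ e^{|y|²/p(y) - |x|²/p(x)} ≤ e^{2C_{γ_d}} e^{(|y|²-|x|²)/p_∞}`. -/
theorem exp_ratio_comparable (d : ℕ)
    (p : EuclideanSpace ℝ (Fin d) → ℝ) (hpmeas : Measurable p)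
    (h1p : ∀ x, 1 ≤ p x)
    (Cγ pinf : ℝ) (hCγ : 0 < Cγ) (hpinf : 1 ≤ pinf)
    (hPγ : ∀ x : EuclideanSpace ℝ (Fin d), x ≠ 0 → |p x - pinf| ≤ Cγ / ‖x‖ ^ 2) :
    ∀ x y : EuclideanSpace ℝ (Fin d),
      |(‖y‖ ^ 2 / p y - ‖x‖ ^ 2 / p x) - (‖y‖ ^ 2 - ‖x‖ ^ 2) / pinf| ≤ 2 * Cγ ∧
      Real.exp (-(2 * Cγ)) * Real.exp ((‖y‖ ^ 2 - ‖x‖ ^ 2) / pinf) ≤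
        Real.exp (‖y‖ ^ 2 / p y - ‖x‖ ^ 2 / p x) ∧
      Real.exp (‖y‖ ^ 2 / p y - ‖x‖ ^ 2 / p x) ≤
        Real.exp (2 * Cγ) * Real.exp ((‖y‖ ^ 2 - ‖x‖ ^ 2) / pinf) := by
  have key : ∀ x : EuclideanSpace ℝ (Fin d),
      |‖x‖ ^ 2 / p x - ‖x‖ ^ 2 / pinf| ≤ Cγ := by
    intro x
    by_cases hx : x = 0
    · simp [hx, hCγ.le]
    · have hpx : (0:ℝ) < p x := lt_of_lt_of_le one_pos (h1p x)
      have hpi : (0:ℝ) < pinf := lt_of_lt_of_le one_pos hpinf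
      have hnx : (0:ℝ) < ‖x‖ ^ 2 := pow_pos (norm_pos_iff.mpr hx) 2
      have h1 : ‖x‖ ^ 2 / p x - ‖x‖ ^ 2 / pinf = ‖x‖ ^ 2 * (pinf - p x) / (p x * pinf) := by
        field_simp
      rw [h1, abs_div, abs_mul, abs_of_pos hnx, abs_of_pos (mul_pos hpx hpi)]
      calc ‖x‖ ^ 2 * |pinf - p x| / (p x * pinf)
          ≤ ‖x‖ ^ 2 * (Cγ / ‖x‖ ^ 2) / 1 := by
            apply div_le_div₀ (by positivity) _ one_pos
              (one_le_mul_of_one_le_of_one_le (h1p x) hpinf)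
            apply mul_le_mul_of_nonneg_left _ hnx.le
            rw [abs_sub_comm]; exact hPγ x hx
        _ = Cγ := by field_simp
  intro x y
  have hb : |(‖y‖ ^ 2 / p y - ‖x‖ ^ 2 / p x) - (‖y‖ ^ 2 - ‖x‖ ^ 2) / pinf| ≤ 2 * Cγ := by
    have h2 : (‖y‖ ^ 2 / p y - ‖x‖ ^ 2 / p x) - (‖y‖ ^ 2 - ‖x‖ ^ 2) / pinf
        = (‖y‖ ^ 2 / p y - ‖y‖ ^ 2 / pinf) - (‖x‖ ^ 2 / p x - ‖x‖ ^ 2 / pinf) := by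
      ring
    rw [h2]
    calc |(‖y‖ ^ 2 / p y - ‖y‖ ^ 2 / pinf) - (‖x‖ ^ 2 / p x - ‖x‖ ^ 2 / pinf)|
        ≤ |‖y‖ ^ 2 / p y - ‖y‖ ^ 2 / pinf| + |‖x‖ ^ 2 / p x - ‖x‖ ^ 2 / pinf| :=
          abs_sub _ _
      _ ≤ Cγ + Cγ := add_le_add (key y) (key x)
      _ = 2 * Cγ := by ring
  refine ⟨hb, ?_, ?_⟩
  · rw [← Real.exp_add]
    apply Real.exp_le_exp.2
    linarith [abs_le.1 hb |>.1]
  · rw [← Real.exp_add]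
    apply Real.exp_le_exp.2
    linarith [abs_le.1 hb |>.2]
end
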